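/- Let k = 2 and m ≥ 2, and let L'_2m = [L_2m, L_2m] denote the commutator ideal of L_2m, i.e., the K-linear span of all brackets [u,v] with u, v ∈ L_2m. Then L'_2m is a C_2m^{(0)}-module: for every u ∈ L'_2m and every c ∈ C_2m^{(0)}, the matrix product u·c belongs to L'_2m. -/

import Mathlib

open scoped BigOperators
noncomputable section

attribute [local instance 100] LieRing.ofAssociativeRing

/-- `Ω = K[y_pq^(i)]`, matrices over the polynomial ring in `k²m` variables. -/
abbrev Mat (K : Type) [Field K] (k m : ℕ) :=
  Matrix (Fin k) (Fin k) (MvPolynomial (Fin m × Fin k × Fin k) K)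

/-- The generic `k × k` matrices `y_i = (y_pq^(i))`. -/
def genY (K : Type) [Field K] (k m : ℕ) (i : Fin m) : Mat K k m :=
  Matrix.of fun p q => MvPolynomial.X (i, p, q)

/-- The scalar matrix `f · I` for `f ∈ Ω`. -/
def scalarOf (K : Type) [Field K] (k m : ℕ)
    (f : MvPolynomial (Fin m × Fin k × Fin k) K) : Mat K k m :=
  algebraMap _ _ f

/-- `R_km`: the generic matrix algebra, generated by `y_1, …, y_m`. -/
def Rkm (K : Type) [Field K] (k m : ℕ) : Subalgebra K (Mat K k m) :=
  Algebra.adjoin K (Set.range (genY K k m))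

/-- `C_km`: the pure trace algebra, generated by the `tr(y_{i_1} ⋯ y_{i_l}) · I`, `l ≥ 1`. -/
def Ckm (K : Type) [Field K] (k m : ℕ) : Subalgebra K (Mat K k m) :=
  Algebra.adjoin K
    {x | ∃ (l : ℕ) (w : Fin (l + 1) → Fin m),
      x = scalarOf K k m (Matrix.trace ((List.ofFn fun j => genY K k m (w j)).prod))}

/-- `T_km`: the mixed trace algebra, generated by `R_km ∪ C_km`. -/
def Tkm (K : Type) [Field K] (k m : ℕ) : Subalgebra K (Mat K k m) :=
  Rkm K k m ⊔ Ckm K k m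

/-- The generic traceless matrices `z_i = y_i - (1/k)·tr(y_i)·I`. -/
def genZ (K : Type) [Field K] (k m : ℕ) (i : Fin m) : Mat K k m :=
  genY K k m i - (k : K)⁻¹ • scalarOf K k m (Matrix.trace (genY K k m i))

/-- `W_km`: the algebra generated by the generic traceless matrices `z_1, …, z_m`. -/
def Wkm (K : Type) [Field K] (k m : ℕ) : Subalgebra K (Mat K k m) :=
  Algebra.adjoin K (Set.range (genZ K k m))

/-- `C_km⁰`: the algebra generated by the `tr(z_{i_1} ⋯ z_{i_l}) · I`, `l ≥ 1`. -/
def Ckm0 (K : Type) [Field K] (k m : ℕ) : Subalgebra K (Mat K k m) :=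
  Algebra.adjoin K
    {x | ∃ (l : ℕ) (w : Fin (l + 1) → Fin m),
      x = scalarOf K k m (Matrix.trace ((List.ofFn fun j => genZ K k m (w j)).prod))}

/-- `T_km⁰`: the algebra generated by `W_km ∪ C_km⁰`. -/
def Tkm0 (K : Type) [Field K] (k m : ℕ) : Subalgebra K (Mat K k m) :=
  Wkm K k m ⊔ Ckm0 K k m

/-- The subspace of matrices all of whose entries have total degree at most `n`,
i.e. `M_k(Ω_{≤n})`. -/
def degLE (K : Type) [Field K] (k m n : ℕ) : Submodule K (Mat K k m) where
  carrier := {a | ∀ p q, (a p q).totalDegree ≤ n}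
  add_mem' := by
    intro a b ha hb p q
    calc ((a + b) p q).totalDegree = (a p q + b p q).totalDegree := by simp [Matrix.add_apply]
    _ ≤ max (a p q).totalDegree (b p q).totalDegree := MvPolynomial.totalDegree_add _ _
    _ ≤ n := max_le (ha p q) (hb p q)
  zero_mem' := by intro p q; simp
  smul_mem' := by
    intro c a ha p q
    calc ((c • a) p q).totalDegree = (c • a p q).totalDegree := by simp [Matrix.smul_apply]
    _ ≤ (a p q).totalDegree := MvPolynomial.totalDegree_smul_le _ _
    _ ≤ n := ha p q

/-- `L_2m`: the Lie subalgebra of `M_2(Ω)` (with `[a,b] = ab − ba`) generated by the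
generic traceless matrices `z_1, …, z_m`. -/
def L2m (K : Type) [Field K] (m : ℕ) : LieSubalgebra K (Mat K 2 m) :=
  LieSubalgebra.lieSpan K (Mat K 2 m) (Set.range (genZ K 2 m))

/-- The commutator ideal `L'_2m = [L_2m, L_2m]`: the `K`-linear span of all brackets
`[u, v]` with `u, v ∈ L_2m`. -/
def L2m' (K : Type) [Field K] (m : ℕ) : Submodule K (Mat K 2 m) :=
  Submodule.span K {x | ∃ u ∈ L2m K m, ∃ v ∈ L2m K m, x = ⁅u, v⁆}


namespace Stmt13Aux

variable (K : Type) [Field K] [CharZero K] (m : ℕ)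

set_option linter.unusedSectionVars false

/-- The key 2×2 identity: for traceless matrices, `ab + ba = tr(ab)·1`. -/
lemma key2 (a b : Mat K 2 m) (ha : Matrix.trace a = 0) (hb : Matrix.trace b = 0) :
    a * b + b * a = Matrix.trace (a * b) • (1 : Mat K 2 m) := by
  simp only [Matrix.trace, Fin.sum_univ_two, Matrix.diag] at ha hb
  refine Matrix.ext fun p q => ?_
  fin_cases p <;> fin_cases q <;>
    simp [Matrix.mul_apply, Matrix.trace, Matrix.diag, Fin.sum_univ_two, Matrix.one_apply,
      Matrix.smul_apply, smul_eq_mul]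
  · linear_combination a 0 0 * hb - b 1 1 * ha
  · linear_combination b 0 1 * ha + a 0 1 * hb
  · linear_combination b 1 0 * ha + a 1 0 * hb
  · linear_combination a 1 1 * hb - b 0 0 * ha

lemma keyC (a b u : Mat K 2 m) (ha : Matrix.trace a = 0) (hb : Matrix.trace b = 0)
    (hu : Matrix.trace u = 0) :
    ⁅a, ⁅b, u⁆⁆ + ⁅b, ⁅a, u⁆⁆
      + (Matrix.trace (b*u) • a + Matrix.trace (b*u) • a)
      + (Matrix.trace (a*u) • b + Matrix.trace (a*u) • b)
    = Matrix.trace (a*b) • u + Matrix.trace (a*b) • u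
      + Matrix.trace (a*b) • u + Matrix.trace (a*b) • u := by
  have h1 := key2 K m a b ha hb
  have h2 := key2 K m b u hb hu
  have h3 := key2 K m a u ha hu
  have e1 : a*b*u + b*a*u = Matrix.trace (a*b) • u := by
    rw [← add_mul, h1, smul_mul_assoc, one_mul]
  have e2 : u*(a*b) + u*(b*a) = Matrix.trace (a*b) • u := by
    rw [← mul_add, h1, mul_smul_comm, mul_one]
  have e3 : a*(b*u) + a*(u*b) = Matrix.trace (b*u) • a := by
    rw [← mul_add, h2, mul_smul_comm, mul_one]
  have e4 : b*(a*u) + b*(u*a) = Matrix.trace (a*u) • b := by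
    rw [← mul_add, h3, mul_smul_comm, mul_one]
  simp only [Ring.lie_def]
  linear_combination (norm := noncomm_ring) 3*e1 + e2 - 2*e3 - 2*e4

/-- The traceless matrices form a Lie subalgebra. -/
def sl : LieSubalgebra K (Mat K 2 m) where
  carrier := {x | Matrix.trace x = 0}
  add_mem' := by intro x y hx hy; simp only [Set.mem_setOf_eq] at *; simp [hx, hy]
  zero_mem' := by simp
  smul_mem' := by intro c x hx; simp only [Set.mem_setOf_eq] at *; simp [hx]
  lie_mem' := by
    intro x y _ _
    show Matrix.trace ⁅x, y⁆ = 0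
    rw [Ring.lie_def, Matrix.trace_sub, Matrix.trace_mul_comm x y, sub_self]

lemma trace_scalarOf (f : MvPolynomial (Fin m × Fin 2 × Fin 2) K) :
    Matrix.trace (scalarOf K 2 m f) = f * 2 := by
  unfold scalarOf
  rw [Algebra.algebraMap_eq_smul_one, Matrix.trace_smul, Matrix.trace_one, smul_eq_mul]
  norm_num

lemma trace_genZ (i : Fin m) : Matrix.trace (genZ K 2 m i) = 0 := by
  have h2 : (MvPolynomial.C ((2:K)⁻¹) : MvPolynomial (Fin m × Fin 2 × Fin 2) K) * 2 = 1 := by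
    rw [show ((2:MvPolynomial (Fin m × Fin 2 × Fin 2) K)) = MvPolynomial.C (2:K) from
      (map_ofNat (MvPolynomial.C : K →+* MvPolynomial (Fin m × Fin 2 × Fin 2) K) 2).symm,
      ← map_mul, inv_mul_cancel₀ (two_ne_zero), map_one]
  rw [genZ, Matrix.trace_sub, Matrix.trace_smul, trace_scalarOf, MvPolynomial.smul_eq_C_mul]
  set t := Matrix.trace (genY K 2 m i)
  linear_combination (-t) * h2

lemma trace_eq_zero_of_mem_L2m : ∀ x ∈ L2m K m, Matrix.trace x = 0 := by
  have h : L2m K m ≤ sl K m := by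
    apply LieSubalgebra.lieSpan_le.mpr
    rintro x ⟨i, rfl⟩
    exact trace_genZ K m i
  exact fun x hx => h hx

lemma bracket_mem_L2m' {x y : Mat K 2 m} (hx : x ∈ L2m K m) (hy : y ∈ L2m K m) :
    ⁅x, y⁆ ∈ L2m' K m :=
  Submodule.subset_span ⟨x, hx, y, hy, rfl⟩

/-- Main lemma: `tr(ab)·⁅u,v⁆ ∈ L'` for `a,b,u,v ∈ L`. -/
lemma keyD {a b u v : Mat K 2 m} (ha : a ∈ L2m K m) (hb : b ∈ L2m K m)
    (hu : u ∈ L2m K m) (hv : v ∈ L2m K m) :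
    Matrix.trace (a * b) • ⁅u, v⁆ ∈ L2m' K m := by
  classical
  set π := (L2m' K m).mkQ with hπdef
  have hπ0 : ∀ x y : Mat K 2 m, x ∈ L2m K m → y ∈ L2m K m → π ⁅x, y⁆ = 0 := by
    intro x y hx hy
    rw [hπdef, Submodule.mkQ_apply, Submodule.Quotient.mk_eq_zero]
    exact bracket_mem_L2m' K m hx hy
  -- The basic relation in the quotient
  have R : ∀ a b u v : Mat K 2 m, a ∈ L2m K m → b ∈ L2m K m → u ∈ L2m K m → v ∈ L2m K m →
      π (Matrix.trace (b*u) • ⁅a, v⁆) + π (Matrix.trace (b*u) • ⁅a, v⁆)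
        + (π (Matrix.trace (a*u) • ⁅b, v⁆) + π (Matrix.trace (a*u) • ⁅b, v⁆))
      = π (Matrix.trace (a*b) • ⁅u, v⁆) + π (Matrix.trace (a*b) • ⁅u, v⁆)
        + π (Matrix.trace (a*b) • ⁅u, v⁆) + π (Matrix.trace (a*b) • ⁅u, v⁆) := by
    intro a b u v ha hb hu hv
    have hC := keyC K m a b u (trace_eq_zero_of_mem_L2m K m a ha)
      (trace_eq_zero_of_mem_L2m K m b hb) (trace_eq_zero_of_mem_L2m K m u hu)
    have hCv := congrArg (fun x => ⁅x, v⁆) hC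
    simp only [add_lie, smul_lie] at hCv
    have hq := congrArg π hCv
    have z1 : π ⁅⁅a, ⁅b, u⁆⁆, v⁆ = 0 :=
      hπ0 _ _ ((L2m K m).lie_mem ha ((L2m K m).lie_mem hb hu)) hv
    have z2 : π ⁅⁅b, ⁅a, u⁆⁆, v⁆ = 0 :=
      hπ0 _ _ ((L2m K m).lie_mem hb ((L2m K m).lie_mem ha hu)) hv
    simp only [map_add, z1, z2, zero_add, add_zero] at hq
    linear_combination (norm := module) hq
  have sym12 : ∀ a b u v : Mat K 2 m,
      π (Matrix.trace (a*b) • ⁅u, v⁆) = π (Matrix.trace (b*a) • ⁅u, v⁆) := by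
    intro a b u v; rw [Matrix.trace_mul_comm]
  have anti34 : ∀ a b u v : Mat K 2 m,
      π (Matrix.trace (a*b) • ⁅u, v⁆) = - π (Matrix.trace (a*b) • ⁅v, u⁆) := by
    intro a b u v
    rw [← lie_skew u v, smul_neg, map_neg]
  have swap13 : ∀ a b u v : Mat K 2 m, a ∈ L2m K m → b ∈ L2m K m → u ∈ L2m K m →
      v ∈ L2m K m →
      π (Matrix.trace (a*b) • ⁅u, v⁆) = π (Matrix.trace (u*b) • ⁅a, v⁆) := by
    intro a b u v ha hb hu hv
    have R1 := R a b u v ha hb hu hv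
    have R2 := R a u b v ha hu hb hv
    have hs : π (Matrix.trace (b*u) • ⁅a, v⁆) = π (Matrix.trace (u*b) • ⁅a, v⁆) :=
      sym12 b u a v
    linear_combination (norm := module)
      (-(1/3 : K)) • R1 + (-(1/6 : K)) • R2 + ((2/3 : K)) • hs
  -- Conclude g = 0
  have g0 : ∀ a b u v : Mat K 2 m, a ∈ L2m K m → b ∈ L2m K m → u ∈ L2m K m →
      v ∈ L2m K m → π (Matrix.trace (a*b) • ⁅u, v⁆) = 0 := by
    intro a b u v ha hb hu hv
    -- chain A : g a b u v = g v b u a ; chain B : g a b u v = - g v b u a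
    have chainA : π (Matrix.trace (v*b) • ⁅u, a⁆) = - π (Matrix.trace (v*b) • ⁅a, u⁆) :=
      anti34 v b u a
    have cA1 : π (Matrix.trace (v*b) • ⁅a, u⁆) = π (Matrix.trace (a*b) • ⁅v, u⁆) :=
      swap13 v b a u hv hb ha hu
    have cA2 : π (Matrix.trace (a*b) • ⁅v, u⁆) = - π (Matrix.trace (a*b) • ⁅u, v⁆) :=
      anti34 a b v u
    have chainB1 : π (Matrix.trace (a*b) • ⁅u, v⁆) = π (Matrix.trace (u*b) • ⁅a, v⁆) :=
      swap13 a b u v ha hb hu hv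
    have chainB2 : π (Matrix.trace (u*b) • ⁅a, v⁆) = - π (Matrix.trace (u*b) • ⁅v, a⁆) :=
      anti34 u b a v
    have chainB3 : π (Matrix.trace (u*b) • ⁅v, a⁆) = π (Matrix.trace (v*b) • ⁅u, a⁆) :=
      swap13 u b v a hu hb hv ha
    -- So: g a b u v = -(g u b v a) = -(g v b u a)  and  g v b u a = g a b u v  (from chain A)
    -- chain A gives: g v b u a = -(g v b a u) = -(g a b v u) = g a b u v
    have eA : π (Matrix.trace (v*b) • ⁅u, a⁆) = π (Matrix.trace (a*b) • ⁅u, v⁆) := by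
      rw [chainA, cA1, cA2, neg_neg]
    have eB : π (Matrix.trace (a*b) • ⁅u, v⁆) = - π (Matrix.trace (v*b) • ⁅u, a⁆) := by
      rw [chainB1, chainB2, chainB3]
    have hXX : π (Matrix.trace (a*b) • ⁅u, v⁆) = - π (Matrix.trace (a*b) • ⁅u, v⁆) := by
      rw [eA] at eB; exact eB
    have h0 : π (Matrix.trace (a*b) • ⁅u, v⁆) + π (Matrix.trace (a*b) • ⁅u, v⁆) = 0 := by
      nth_rewrite 1 [hXX]
      exact neg_add_cancel _
    have h2' : (2:K) • π (Matrix.trace (a*b) • ⁅u, v⁆) = 0 := by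
      rw [two_smul]; exact h0
    calc π (Matrix.trace (a*b) • ⁅u, v⁆)
        = (2:K)⁻¹ • ((2:K) • π (Matrix.trace (a*b) • ⁅u, v⁆)) := by
          rw [smul_smul, inv_mul_cancel₀ (two_ne_zero), one_smul]
      _ = 0 := by rw [h2', smul_zero]
  have := g0 a b u v ha hb hu hv
  rw [hπdef, Submodule.mkQ_apply, Submodule.Quotient.mk_eq_zero] at this
  exact this

lemma smul_mem_L2m' {a b : Mat K 2 m} (ha : a ∈ L2m K m) (hb : b ∈ L2m K m) :
    ∀ u ∈ L2m' K m, Matrix.trace (a * b) • u ∈ L2m' K m := by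
  intro u hu
  induction hu using Submodule.span_induction with
  | mem x hx =>
    obtain ⟨p, hp, q, hq, rfl⟩ := hx
    exact keyD K m ha hb hp hq
  | zero => rw [smul_zero]; exact zero_mem _
  | add x y _ _ ihx ihy => rw [smul_add]; exact add_mem ihx ihy
  | smul c x _ ihx => rw [smul_comm]; exact Submodule.smul_mem _ c ihx

/-- The subalgebra generated by the `tr(ab)·1` with `a, b ∈ L2m`. -/
def Csub : Subalgebra K (Mat K 2 m) :=
  Algebra.adjoin K {x | ∃ a b : Mat K 2 m, a ∈ L2m K m ∧ b ∈ L2m K m ∧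
    x = scalarOf K 2 m (Matrix.trace (a * b))}

lemma scalarOf_ksmul (c : K) (f : MvPolynomial (Fin m × Fin 2 × Fin 2) K) :
    scalarOf K 2 m (c • f) = c • scalarOf K 2 m f := by
  unfold scalarOf
  rw [Algebra.smul_def, map_mul, Algebra.smul_def, ← IsScalarTower.algebraMap_apply]

lemma word_trace_mem : ∀ (n : ℕ) (li : List (Mat K 2 m)), li.length = n → li ≠ [] →
    (∀ x ∈ li, x ∈ L2m K m) → scalarOf K 2 m (Matrix.trace li.prod) ∈ Csub K m := by
  intro n
  induction n using Nat.strong_induction_on with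
  | _ n ih =>
    intro li hlen hne hmem
    match li with
    | [] => exact absurd rfl hne
    | [a] =>
      have : Matrix.trace a = 0 := trace_eq_zero_of_mem_L2m K m a (hmem a (by simp))
      simp only [List.prod_cons, List.prod_nil, mul_one, this]
      rw [show scalarOf K 2 m 0 = 0 from map_zero (algebraMap _ _)]
      exact zero_mem _
    | [a, b] =>
      simp only [List.prod_cons, List.prod_nil, mul_one]
      exact Algebra.subset_adjoin ⟨a, b, hmem a (by simp), hmem b (by simp), rfl⟩
    | a :: b :: c :: rest =>
      have haL : a ∈ L2m K m := hmem a (by simp)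
      have hbL : b ∈ L2m K m := hmem b (by simp)
      have hab : a * b = (2:K)⁻¹ • (Matrix.trace (a*b) • (1 : Mat K 2 m) + ⁅a, b⁆) := by
        have h := key2 K m a b (trace_eq_zero_of_mem_L2m K m a haL)
          (trace_eq_zero_of_mem_L2m K m b hbL)
        have h2 : Matrix.trace (a*b) • (1 : Mat K 2 m) + ⁅a, b⁆ = a*b + a*b := by
          rw [Ring.lie_def, ← h]; abel
        rw [h2, ← two_smul K (a*b), smul_smul, inv_mul_cancel₀ (two_ne_zero), one_smul]
      have hprod : ((a :: b :: c :: rest) : List (Mat K 2 m)).prod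
          = (a * b) * (c :: rest).prod := by
        simp [List.prod_cons, mul_assoc]
      have htr : Matrix.trace ((a :: b :: c :: rest) : List (Mat K 2 m)).prod
          = (2:K)⁻¹ • (Matrix.trace (a*b) * Matrix.trace ((c :: rest) : List (Mat K 2 m)).prod
              + Matrix.trace (⁅a,b⁆ * ((c :: rest) : List (Mat K 2 m)).prod)) := by
        rw [hprod]
        conv_lhs => rw [hab]
        rw [smul_mul_assoc, Matrix.trace_smul, add_mul, smul_mul_assoc, one_mul,
          Matrix.trace_add, Matrix.trace_smul, smul_eq_mul]
      rw [htr, scalarOf_ksmul]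
      refine Subalgebra.smul_mem _ ?_ _
      rw [show scalarOf K 2 m (Matrix.trace (a*b)
              * Matrix.trace ((c :: rest) : List (Mat K 2 m)).prod
              + Matrix.trace (⁅a,b⁆ * ((c :: rest) : List (Mat K 2 m)).prod))
          = scalarOf K 2 m (Matrix.trace (a*b))
              * scalarOf K 2 m (Matrix.trace ((c :: rest) : List (Mat K 2 m)).prod)
            + scalarOf K 2 m (Matrix.trace (⁅a,b⁆ * ((c :: rest) : List (Mat K 2 m)).prod))
          from by unfold scalarOf; rw [map_add, map_mul]]
      refine add_mem (mul_mem ?_ ?_) ?_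
      · exact Algebra.subset_adjoin ⟨a, b, haL, hbL, rfl⟩
      · exact ih (rest.length + 1) (by simp at hlen; omega) (c :: rest) (by simp) (by simp)
          (fun x hx => hmem x (List.mem_cons_of_mem _ (List.mem_cons_of_mem _ hx)))
      · have hbr : ⁅a,b⁆ * ((c :: rest) : List (Mat K 2 m)).prod
            = ((⁅a,b⁆ :: c :: rest) : List (Mat K 2 m)).prod := by
          simp [List.prod_cons]
        rw [hbr]
        refine ih (rest.length + 2) (by simp at hlen; omega) _ (by simp) (by simp) ?_
        intro x hx
        rcases List.mem_cons.mp hx with h | h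
        · rw [h]; exact (L2m K m).lie_mem haL hbL
        · exact hmem x (List.mem_cons_of_mem _ (List.mem_cons_of_mem _ h))

lemma Ckm0_le_Csub : Ckm0 K 2 m ≤ Csub K m := by
  apply Algebra.adjoin_le
  rintro x ⟨l, w, rfl⟩
  refine word_trace_mem K m (l+1) _ (by simp) (by simp) ?_
  intro x hx
  obtain ⟨j, rfl⟩ := List.mem_ofFn.mp hx
  exact LieSubalgebra.subset_lieSpan (Set.mem_range_self (w j))

end Stmt13Aux

/-- For `k = 2`, `m ≥ 2`, the commutator ideal `L'_2m` is a
`C_2m⁰`-module: `u·c ∈ L'_2m` for all `u ∈ L'_2m` and `c ∈ C_2m⁰`. -/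
theorem stmt13 (K : Type) [Field K] [CharZero K] (m : ℕ) (hm : 2 ≤ m) :
    ∀ u ∈ L2m' K m, ∀ c ∈ Ckm0 K 2 m, u * c ∈ L2m' K m := by
  classical
  have main : ∀ c ∈ Stmt13Aux.Csub K m, ∀ u ∈ L2m' K m, u * c ∈ L2m' K m := by
    intro c hc
    induction hc using Algebra.adjoin_induction with
    | mem x hx =>
      obtain ⟨a, b, haL, hbL, rfl⟩ := hx
      intro u hu
      have heq : u * scalarOf K 2 m (Matrix.trace (a*b)) = Matrix.trace (a*b) • u := by
        unfold scalarOf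
        rw [Algebra.algebraMap_eq_smul_one, mul_smul_comm, mul_one]
      rw [heq]
      exact Stmt13Aux.smul_mem_L2m' K m haL hbL u hu
    | algebraMap r =>
      intro u hu
      have heq : u * algebraMap K (Mat K 2 m) r = r • u := by
        rw [Algebra.algebraMap_eq_smul_one, mul_smul_comm, mul_one]
      rw [heq]
      exact Submodule.smul_mem _ r hu
    | add x y hx hy ihx ihy =>
      intro u hu
      rw [mul_add]
      exact add_mem (ihx u hu) (ihy u hu)
    | mul x y hx hy ihx ihy =>
      intro u hu
      rw [← mul_assoc]
      exact ihy _ (ihx u hu)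
  intro u hu c hc
  exact main c (Stmt13Aux.Ckm0_le_Csub K m hc) u hu
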